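/- Let G : [0,∞) → ℝ be continuous with G(0) = 0, and let a > 0. Define ψ_j : ℝ → ℝ by ψ_j(x) = |x| if j is odd and ψ_j(x) = a − |x − a| if j is even, and φ_k = ψ_k ∘ ⋯ ∘ ψ_1. Then for every r > 0 there exists k such that φ_{k+j}(G(s)) = φ_k(G(s)) for all 0 ≤ s ≤ r and all j ≥ 1; hence H(s) := lim_{k→∞} φ_k(G(s)) exists, is continuous, takes values in [0,a], and satisfies |H(s) − H(t)| ≤ |G(s) − G(t)| for all s, t. -/
import Mathlib


open Filter

/-- Let `G : [0,∞) → ℝ` be continuous with `G 0 = 0`, `a > 0`.  With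
`ψ_j(x) = |x|` for `j` odd and `ψ_j(x) = a − |x − a|` for `j` even, and
`φ_k = ψ_k ∘ ⋯ ∘ ψ_1`, for every `r > 0` there is `k` such that
`φ_{k+j}(G s) = φ_k(G s)` for all `0 ≤ s ≤ r`, `j ≥ 1`; hence
`H s := lim_k φ_k (G s)` exists, is continuous on `[0,∞)`, takes values in `[0,a]`, and
satisfies `|H s − H t| ≤ |G s − G t|` (the trajectory `G` reflected into `[0,a]`). -/
theorem iterated_reflection_into_interval
    (a : ℝ) (ha : 0 < a)
    (G : ℝ → ℝ) (hG : Continuous G) (hG0 : G 0 = 0)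
    (ψ : ℕ → ℝ → ℝ)
    (hψ : ∀ j x, ψ j x = if Odd j then |x| else a - |x - a|)
    (φ : ℕ → ℝ → ℝ)
    (hφ1 : ∀ x, φ 1 x = ψ 1 x)
    (hφsucc : ∀ k, 1 ≤ k → ∀ x, φ (k + 1) x = ψ (k + 1) (φ k x)) :
    (∀ r : ℝ, 0 < r → ∃ k : ℕ, 1 ≤ k ∧
      ∀ j : ℕ, ∀ s ∈ Set.Icc (0 : ℝ) r, φ (k + j) (G s) = φ k (G s)) ∧
    ∃ H : ℝ → ℝ,
      (∀ s : ℝ, 0 ≤ s → Tendsto (fun k => φ k (G s)) atTop (nhds (H s))) ∧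
      ContinuousOn H (Set.Ici 0) ∧
      (∀ s : ℝ, 0 ≤ s → H s ∈ Set.Icc 0 a) ∧
      (∀ s t : ℝ, 0 ≤ s → 0 ≤ t → |H s - H t| ≤ |G s - G t|) := by
  -- ψ fixes [0,a]
  have hfix : ∀ j x, x ∈ Set.Icc (0:ℝ) a → ψ j x = x := by
    intro j x hx
    obtain ⟨hx0, hxa⟩ := hx
    rw [hψ]
    split_ifs
    · exact abs_of_nonneg hx0
    · rw [abs_of_nonpos (by linarith)]; ring
  -- once φ k lands in [0,a], all later iterates agree
  have hφfix : ∀ k, 1 ≤ k → ∀ x, φ k x ∈ Set.Icc (0:ℝ) a →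
      ∀ j, φ (k + j) x = φ k x := by
    intro k hk x hx j
    induction j with
    | zero => rfl
    | succ n ih =>
        have : k + (n + 1) = (k + n) + 1 := by ring
        rw [this, hφsucc (k + n) (by omega) x, ih, hfix _ _ hx]
  have hodd : ∀ n : ℕ, Odd (2 * n + 1) := fun n => ⟨n, by ring⟩
  have heven : ∀ n : ℕ, ¬ Odd (2 * n + 2) := by
    intro n
    simp [Nat.odd_iff]
  -- reaching lemma
  have hreach : ∀ m : ℕ, ∀ x : ℝ, φ (2 * m + 1) x ∈ Set.Icc (0:ℝ) a ∨
      (φ (2 * m + 1) x = |x| - 2 * m * a ∧ a < |x| - 2 * m * a) := by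
    intro m x
    induction m with
    | zero =>
        have h1 : φ 1 x = |x| := by
          rw [hφ1, hψ, if_pos (hodd 0)]
        by_cases h : |x| ≤ a
        · left; simp [h1, abs_nonneg, h]
        · right; constructor
          · simpa using h1
          · push_cast; push_neg at h; linarith
    | succ n ih =>
        rcases ih with h | ⟨heq, hgt⟩
        · left
          have : 2 * (n + 1) + 1 = (2 * n + 1) + 2 := by ring
          rw [this, hφfix (2 * n + 1) (by omega) x h 2]
          exact h
        · set y := |x| - 2 * n * a with hy
          have h2 : φ (2 * n + 2) x = 2 * a - y := by
            rw [show 2 * n + 2 = (2 * n + 1) + 1 from by ring,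
              hφsucc (2 * n + 1) (by omega) x, heq, hψ,
              if_neg (by rw [show (2*n+1)+1 = 2*n+2 from by ring]; exact heven n)]
            rw [abs_of_nonneg (by dsimp [y] at hgt ⊢; linarith)]
            ring
          have h3 : φ (2 * (n + 1) + 1) x = |2 * a - y| := by
            rw [show 2 * (n + 1) + 1 = (2 * n + 2) + 1 from by ring,
              hφsucc (2 * n + 2) (by omega) x, h2, hψ,
              if_pos (by rw [show (2*n+2)+1 = 2*(n+1)+1 from by ring]; exact hodd (n+1))]
          have hya : a < y := hgt
          by_cases hy2 : y ≤ 2 * a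
          · left
            rw [h3, abs_of_nonneg (by linarith)]
            constructor <;> linarith
          · push_neg at hy2
            have h4 : φ (2 * (n + 1) + 1) x = y - 2 * a := by
              rw [h3, abs_of_nonpos (by linarith)]; ring
            have hyx : y - 2 * a = |x| - 2 * (n + 1 : ℕ) * a := by
              dsimp [y]; push_cast; ring
            by_cases h5 : y - 2 * a ≤ a
            · left
              rw [h4]
              constructor <;> linarith
            · right
              push_neg at h5
              rw [← hyx]
              exact ⟨h4, h5⟩
  -- stabilization
  have hstab : ∀ m : ℕ, ∀ x : ℝ, |x| ≤ 2 * m * a →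
      φ (2 * m + 1) x ∈ Set.Icc (0:ℝ) a := by
    intro m x hx
    rcases hreach m x with h | ⟨_, hgt⟩
    · exact h
    · exfalso; linarith
  -- index function
    -- K x = 2 * ⌈|x| / (2a)⌉₊ + 1 works
  set K : ℝ → ℕ := fun x => 2 * ⌈|x| / (2 * a)⌉₊ + 1 with hK
  have hKbound : ∀ x : ℝ, |x| ≤ 2 * (⌈|x| / (2 * a)⌉₊ : ℝ) * a := by
    intro x
    have h := Nat.le_ceil (|x| / (2 * a))
    have h2a : (0:ℝ) < 2 * a := by linarith
    rw [div_le_iff₀ h2a] at h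
    linarith
  have hKmem : ∀ x : ℝ, φ (K x) x ∈ Set.Icc (0:ℝ) a := fun x =>
    hstab _ x (hKbound x)
  have hKstab : ∀ x : ℝ, ∀ j, φ (K x + j) x = φ (K x) x := fun x j =>
    hφfix (K x) (by simp [hK]) x (hKmem x) j
  -- Lipschitz of φ k
  have hψLip : ∀ j (u v : ℝ), |ψ j u - ψ j v| ≤ |u - v| := by
    intro j u v
    rw [hψ, hψ]
    split_ifs
    · exact abs_abs_sub_abs_le_abs_sub u v
    · have h := abs_abs_sub_abs_le_abs_sub (u - a) (v - a)
      have e1 : (u - a) - (v - a) = u - v := by ring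
      rw [e1] at h
      have e2 : (a - |u - a|) - (a - |v - a|) = -(|u - a| - |v - a|) := by ring
      rw [e2, abs_neg]
      exact h
  have hLip : ∀ k, 1 ≤ k → ∀ u v : ℝ, |φ k u - φ k v| ≤ |u - v| := by
    intro k hk
    induction k with
    | zero => omega
    | succ n ih =>
        intro u v
        by_cases hn : 1 ≤ n
        · rw [hφsucc n hn u, hφsucc n hn v]
          exact le_trans (hψLip (n + 1) _ _) (ih hn u v)
        · have : n = 0 := by omega
          subst this
          rw [hφ1, hφ1]
          exact hψLip 1 u v
  -- F: the reflected value
  set F : ℝ → ℝ := fun x => φ (K x) x with hF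
  have hFstab : ∀ x : ℝ, ∀ k, K x ≤ k → φ k x = F x := by
    intro x k hk
    obtain ⟨j, rfl⟩ := Nat.exists_eq_add_of_le hk
    exact hKstab x j
  have hFLip : ∀ u v : ℝ, |F u - F v| ≤ |u - v| := by
    intro u v
    set N := max (K u) (K v) with hN
    rw [← hFstab u N (le_max_left _ _), ← hFstab v N (le_max_right _ _)]
    exact hLip N (by simp [hN, hK]) u v
  have hFcont : Continuous F := by
    apply LipschitzWith.continuous (K := 1)
    intro u v
    simp only [ENNReal.coe_one, one_mul, edist_dist, Real.dist_eq]
    exact ENNReal.ofReal_le_ofReal (hFLip u v)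
  refine ⟨?_, F ∘ G, ?_, ?_, ?_, ?_⟩
  · -- uniform stabilization on [0, r]
    intro r hr
    obtain ⟨M, hM⟩ := (isCompact_Icc (a := (0:ℝ)) (b := r)).exists_bound_of_continuousOn
      (hG.continuousOn)
    set m : ℕ := ⌈M / (2 * a)⌉₊ with hm
    refine ⟨2 * m + 1, by omega, ?_⟩
    intro j s hs
    have hGs : |G s| ≤ 2 * (m : ℝ) * a := by
      have h1 : |G s| ≤ M := by simpa [Real.norm_eq_abs] using hM s hs
      have h2 := Nat.le_ceil (M / (2 * a))
      have h2a : (0:ℝ) < 2 * a := by linarith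
      rw [div_le_iff₀ h2a] at h2
      calc |G s| ≤ M := h1
        _ ≤ (m:ℝ) * (2 * a) := h2
        _ = 2 * (m:ℝ) * a := by ring
    exact hφfix (2 * m + 1) (by omega) (G s) (hstab m (G s) hGs) j
  · -- convergence
    intro s _
    apply Tendsto.congr' (f₁ := fun _ => F (G s))
    · filter_upwards [eventually_ge_atTop (K (G s))] with k hk
      exact (hFstab (G s) k hk).symm
    · exact tendsto_const_nhds
  · exact (hFcont.comp hG).continuousOn
  · intro s _
    exact hKmem (G s)
  · intro s t _ _
    exact hFLip (G s) (G t)
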